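/- Define ζ : (0,1] → [0,∞) implicitly by (2/3)ζ(z)^{3/2} = ln((1+√(1-z²))/z) - √(1-z²). Then as z → 1⁻, ζ(z)^{3/2} = √2·(1-z)^{3/2} + (9√2/20)·(1-z)^{5/2} + O((1-z)^{7/2}). -/

import Mathlib

open Filter Asymptotics Set

noncomputable def Phi (z : ℝ) : ℝ :=
  (3/2) * (Real.log ((1 + Real.sqrt (1 - z^2)) / z) - Real.sqrt (1 - z^2))
    - Real.sqrt 2 * (1-z) ^ ((3:ℝ)/2) - (9 * Real.sqrt 2/20) * (1-z) ^ ((5:ℝ)/2)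

noncomputable def phi' (x : ℝ) : ℝ :=
  -(3/2) * (Real.sqrt (1-x^2)/x - Real.sqrt 2 * Real.sqrt (1-x)
      - (3*Real.sqrt 2/4) * (Real.sqrt (1-x))^3)

lemma rpow_sqrt_pow {a : ℝ} (ha : 0 ≤ a) (n : ℕ) : a ^ ((n:ℝ)/2) = (Real.sqrt a) ^ n := by
  rw [Real.sqrt_eq_rpow, ← Real.rpow_natCast (a ^ ((1:ℝ)/2)) n, ← Real.rpow_mul ha]
  ring_nf

lemma hasDerivAt_Phi {x : ℝ} (hx1 : 1/2 < x) (hx2 : x < 1) :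
    HasDerivAt Phi (phi' x) x := by
  have hx0 : 0 < x := by linarith
  have hs2 : (0:ℝ) < 1 - x^2 := by nlinarith
  have h1x : (0:ℝ) < 1 - x := by linarith
  set s := Real.sqrt (1 - x^2) with hs_def
  have hs : 0 < s := Real.sqrt_pos.2 hs2
  have hssq : s^2 = 1 - x^2 := Real.sq_sqrt hs2.le
  have hinner : HasDerivAt (fun y : ℝ => 1 - y^2) (-(2*x)) x := by
    simpa using ((hasDerivAt_pow 2 x).const_sub 1)
  have hsqrt : HasDerivAt (fun y : ℝ => Real.sqrt (1 - y^2)) (-x/s) x := by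
    have := (Real.hasDerivAt_sqrt (ne_of_gt hs2)).comp x hinner
    refine this.congr_deriv ?_; symm
    rw [← hs_def]
    field_simp
  have hN : HasDerivAt (fun y : ℝ => 1 + Real.sqrt (1 - y^2)) (-x/s) x := by
    simpa using hsqrt.const_add 1
  have hquot : HasDerivAt (fun y : ℝ => (1 + Real.sqrt (1 - y^2)) / y)
      (((-x/s) * x - (1 + s) * 1) / x^2) x :=
    hN.div (hasDerivAt_id x) (ne_of_gt hx0)
  have hfrac_pos : 0 < (1 + s) / x := by positivity
  have h1s : (0:ℝ) < 1 + s := by linarith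
  have hlog : HasDerivAt (fun y : ℝ => Real.log ((1 + Real.sqrt (1 - y^2)) / y))
      (-1/(s*x)) x := by
    have h := hquot.log (ne_of_gt hfrac_pos)
    convert h using 1
    rw [← hs_def]
    have hnum : -x/s*x - (1+s)*1 = -(1+s)/s := by
      field_simp
      linear_combination -hssq
    rw [hnum]
    field_simp
  have hinner1 : HasDerivAt (fun y : ℝ => 1 - y) (-1) x := by
    simpa using (hasDerivAt_id x).const_sub 1
  have hr3 : HasDerivAt (fun y : ℝ => (1-y) ^ ((3:ℝ)/2))
      (((3:ℝ)/2 * (1-x) ^ ((3:ℝ)/2 - 1)) * (-1)) x :=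
    (Real.hasDerivAt_rpow_const (p := (3:ℝ)/2) (Or.inr (by norm_num))).comp x hinner1
  have hr5 : HasDerivAt (fun y : ℝ => (1-y) ^ ((5:ℝ)/2))
      (((5:ℝ)/2 * (1-x) ^ ((5:ℝ)/2 - 1)) * (-1)) x :=
    (Real.hasDerivAt_rpow_const (p := (5:ℝ)/2) (Or.inr (by norm_num))).comp x hinner1
  have hcomb := (((hlog.sub hsqrt).const_mul (3/2 : ℝ)).sub
      (hr3.const_mul (Real.sqrt 2))).sub (hr5.const_mul (9 * Real.sqrt 2 / 20))
  have : Phi = fun z => (3/2) * (Real.log ((1 + Real.sqrt (1 - z^2)) / z) - Real.sqrt (1 - z^2))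
    - Real.sqrt 2 * (1-z) ^ ((3:ℝ)/2) - (9 * Real.sqrt 2/20) * (1-z) ^ ((5:ℝ)/2) := rfl
  rw [this]
  refine hcomb.congr_deriv ?_; symm
  have e1 : (1-x) ^ ((3:ℝ)/2 - 1) = Real.sqrt (1-x) := by
    rw [show ((3:ℝ)/2 - 1) = ((1:ℕ):ℝ)/2 by norm_num, rpow_sqrt_pow h1x.le, pow_one]
  have e5 : (1-x) ^ ((5:ℝ)/2 - 1) = (Real.sqrt (1-x))^3 := by
    rw [show ((5:ℝ)/2 - 1) = ((3:ℕ):ℝ)/2 by norm_num, rpow_sqrt_pow h1x.le]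
  rw [e1, e5, phi', ← hs_def]
  field_simp
  linear_combination (-240) * hssq

lemma aux_div_le {a x : ℝ} (ha : 0 ≤ a) (hx : 1/2 ≤ x) (hx0 : 0 < x) :
    a / x ≤ 2 * a := by
  rw [div_le_iff₀ hx0]
  nlinarith

lemma phi'_bound {x : ℝ} (hx1 : 1/2 ≤ x) (hx2 : x ≤ 1) :
    |phi' x| ≤ 9 * (Real.sqrt (1-x))^5 := by
  have hx0 : 0 < x := by linarith
  have h1x : (0:ℝ) ≤ 1 - x := by linarith
  have h1x' : (0:ℝ) ≤ 1 + x := by linarith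
  set t := Real.sqrt (1-x) with ht_def
  set w := Real.sqrt (1+x) with hw_def
  clear_value t w
  have ht : 0 ≤ t := ht_def ▸ Real.sqrt_nonneg _
  have htsq : t^2 = 1 - x := by rw [ht_def]; exact Real.sq_sqrt h1x
  have hwsq : w^2 = 1 + x := by rw [hw_def]; exact Real.sq_sqrt h1x'
  have hw1 : 1 ≤ w := by
    nlinarith [Real.sqrt_nonneg (1+x), hwsq]
  have h2 : (Real.sqrt 2)^2 = 2 := Real.sq_sqrt (by norm_num)
  have h2nn : (0:ℝ) ≤ Real.sqrt 2 := Real.sqrt_nonneg _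
  have hstw : Real.sqrt (1-x^2) = t * w := by
    rw [ht_def, hw_def, ← Real.sqrt_mul h1x]
    ring_nf
  set B := Real.sqrt 2 * x * (7-3*x)/4 with hB_def
  clear_value B
  have hB0 : 0 ≤ B := by
    rw [hB_def]
    apply div_nonneg _ (by norm_num)
    apply mul_nonneg (mul_nonneg h2nn hx0.le)
    linarith
  have hkey : w^2 - B^2 = (1-x)^2 * (8+24*x-9*x^2)/8 := by
    rw [hwsq, hB_def]
    linear_combination (-(x^2*(7-3*x)^2)/16) * h2
  have hwB : 0 < w + B := by linarith
  have hdiff : w - B = (1-x)^2 * (8+24*x-9*x^2)/(8*(w+B)) := by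
    have : (w - B) * (w + B) = (1-x)^2 * (8+24*x-9*x^2)/8 := by
      rw [← hkey]; ring
    field_simp at this ⊢
    linarith [this]
  have hpoly_pos : (0:ℝ) ≤ 8+24*x-9*x^2 := by nlinarith
  have hpoly_le : 8+24*x-9*x^2 ≤ 23 := by nlinarith
  have hEnn : 0 ≤ w - B := by
    rw [hdiff]; positivity
  have hEle : w - B ≤ (23/8) * (1-x)^2 := by
    rw [hdiff]
    rw [div_le_iff₀ (by positivity)]
    nlinarith [sq_nonneg (1-x)]
  -- h = t * (w - B) / x
  have hphi : phi' x = -(3/2) * (t * (w - B) / x) := by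
    rw [phi', hstw, hB_def,
      show (Real.sqrt (1-x))^3 = (1-x) * Real.sqrt (1-x) by
        rw [pow_succ, Real.sq_sqrt h1x], ← ht_def]
    field_simp
    ring
  have hnn : 0 ≤ t * (w - B) / x := by positivity
  have habs : |phi' x| = (3/2) * (t * (w - B) / x) := by
    rw [hphi, abs_mul, abs_of_nonneg hnn]
    norm_num
  rw [habs]
  have h4 : (1-x)^2 = t^4 := by rw [← htsq]; ring
  have hstep1 : t * (w - B) / x ≤ 2 * (t * (w - B)) := by
    exact aux_div_le (mul_nonneg ht hEnn) hx1 hx0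
  have hstep2 : t * (w - B) ≤ (23/8) * t^5 := by
    calc t * (w - B) ≤ t * ((23/8) * (1-x)^2) := mul_le_mul_of_nonneg_left hEle ht
    _ = (23/8) * t^5 := by rw [h4]; ring
  have ht5 : (0:ℝ) ≤ t^5 := by positivity
  linarith

lemma Phi_one : Phi 1 = 0 := by
  rw [Phi]
  norm_num [Real.zero_rpow]

lemma Phi_tendsto : Tendsto Phi (nhdsWithin 1 (Set.Iio 1)) (nhds 0) := by
  have hc : ContinuousAt Phi 1 := by
    have hsqrt : ContinuousAt (fun z : ℝ => Real.sqrt (1 - z^2)) 1 := by fun_prop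
    have hinner : ContinuousAt (fun z : ℝ => (1 + Real.sqrt (1 - z^2)) / z) 1 :=
      ContinuousAt.div (by fun_prop) continuousAt_id (by norm_num)
    have hlog : ContinuousAt (fun z : ℝ => Real.log ((1 + Real.sqrt (1 - z^2)) / z)) 1 :=
      (Real.continuousAt_log (by positivity)).comp hinner
    have hr3 : ContinuousAt (fun z : ℝ => (1-z) ^ ((3:ℝ)/2)) 1 :=
      (Real.continuousAt_rpow_const (1-1) _ (Or.inr (by norm_num))).comp
        (by fun_prop : ContinuousAt (fun z : ℝ => 1 - z) 1)
    have hr5 : ContinuousAt (fun z : ℝ => (1-z) ^ ((5:ℝ)/2)) 1 :=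
      (Real.continuousAt_rpow_const (1-1) _ (Or.inr (by norm_num))).comp
        (by fun_prop : ContinuousAt (fun z : ℝ => 1 - z) 1)
    exact (((hlog.sub hsqrt).const_mul _).sub (hr3.const_mul _)).sub (hr5.const_mul _)
  have h : Tendsto Phi (nhdsWithin 1 (Set.Iio 1)) (nhds (Phi 1)) :=
    hc.tendsto.mono_left nhdsWithin_le_nhds
  rwa [Phi_one] at h


theorem zeta_expansion_left (ζ : ℝ → ℝ)
    (hζ : ∀ z : ℝ, 0 < z → z ≤ 1 → 0 ≤ ζ z ∧
      (2/3) * (ζ z) ^ ((3:ℝ)/2) =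
        Real.log ((1 + Real.sqrt (1 - z^2)) / z) - Real.sqrt (1 - z^2)) :
    (fun z : ℝ => (ζ z) ^ ((3:ℝ)/2) -
        (Real.sqrt 2 * (1 - z) ^ ((3:ℝ)/2) +
          (9 * Real.sqrt 2 / 20) * (1 - z) ^ ((5:ℝ)/2)))
      =O[nhdsWithin 1 (Set.Iio 1)] (fun z : ℝ => (1 - z) ^ ((7:ℝ)/2)) := by
  rw [isBigO_iff]
  refine ⟨9, ?_⟩
  filter_upwards [Ioo_mem_nhdsLT_of_mem
    (show (1:ℝ) ∈ Set.Ioc (1/2:ℝ) 1 by constructor <;> norm_num)] with z hz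
  obtain ⟨hz1, hz2⟩ := hz
  have h1z : (0:ℝ) < 1 - z := by linarith
  obtain ⟨-, heq⟩ := hζ z (by linarith) hz2.le
  have hfun : ζ z ^ ((3:ℝ)/2) - (Real.sqrt 2 * (1 - z)^((3:ℝ)/2)
      + (9*Real.sqrt 2/20)*(1-z)^((5:ℝ)/2)) = Phi z := by
    rw [Phi]; linarith [heq]
  rw [hfun]
  set C := 9 * (Real.sqrt (1-z))^5 with hC_def
  have hC0 : 0 ≤ C := by positivity
  have key : ∀ y ∈ Set.Ico z 1, ‖Phi y - Phi z‖ ≤ C * ‖y - z‖ := by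
    intro y hy
    refine Convex.norm_image_sub_le_of_norm_hasDerivWithin_le (f' := phi')
      (fun x hx => (hasDerivAt_Phi (lt_of_lt_of_le hz1 hx.1) hx.2).hasDerivWithinAt)
      (fun x hx => ?_) (convex_Ico z 1) (Set.left_mem_Ico.2 hz2) hy
    have hb := phi'_bound (x := x) (by linarith [hx.1]) hx.2.le
    have hmono : Real.sqrt (1-x) ≤ Real.sqrt (1-z) := Real.sqrt_le_sqrt (by linarith [hx.1])
    have hpow := pow_le_pow_left₀ (Real.sqrt_nonneg (1-x)) hmono 5
    calc ‖phi' x‖ = |phi' x| := rfl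
    _ ≤ 9 * (Real.sqrt (1-x))^5 := hb
    _ ≤ C := by rw [hC_def]; linarith
  have hev : ∀ᶠ y in nhdsWithin 1 (Set.Iio 1), ‖Phi y - Phi z‖ ≤ C * (1 - z) := by
    filter_upwards [Ioo_mem_nhdsLT_of_mem
      (show (1:ℝ) ∈ Set.Ioc z 1 from ⟨hz2, le_refl 1⟩)] with y hy
    have h := key y ⟨hy.1.le, hy.2⟩
    have hnrm : ‖y - z‖ = y - z := by
      rw [Real.norm_eq_abs, abs_of_nonneg]; linarith [hy.1]
    calc ‖Phi y - Phi z‖ ≤ C * ‖y - z‖ := h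
    _ = C * (y - z) := by rw [hnrm]
    _ ≤ C * (1 - z) := by
        apply mul_le_mul_of_nonneg_left _ hC0
        linarith [hy.2]
  have hlim : Tendsto (fun y => ‖Phi y - Phi z‖) (nhdsWithin 1 (Set.Iio 1))
      (nhds ‖(0:ℝ) - Phi z‖) := (Phi_tendsto.sub tendsto_const_nhds).norm
  have h2 : ‖Phi z‖ ≤ C * (1 - z) := by
    have := le_of_tendsto hlim hev
    simpa using this
  have h3 : C * (1 - z) = 9 * (1-z) ^ ((7:ℝ)/2) := by
    rw [show ((7:ℝ)/2) = ((7:ℕ):ℝ)/2 by norm_num, rpow_sqrt_pow h1z.le, hC_def]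
    linear_combination (-9*(Real.sqrt (1-z))^5) * Real.sq_sqrt h1z.le
  have h4 : ‖(1-z) ^ ((7:ℝ)/2)‖ = (1-z) ^ ((7:ℝ)/2) :=
    Real.norm_of_nonneg (Real.rpow_nonneg h1z.le _)
  rw [h4]
  linarith
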